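/- Fix β > 0. There exists a constant C > 0 depending only on β such that for all L ≥ 1 and all p ∈ ℝ, ∫_{-L/2}^{L/2} |Φ_L(p,q) − Φ_∞(p,q)|² dq ≤ C e^{2βp²} υ(L/2)². -/

import Mathlib

open MeasureTheory

/-- The Gaussian `υ(q) = (4π/β)^{1/2} e^{-(4π²/β) q²}`. -/
noncomputable def upsilon (β q : ℝ) : ℝ :=
  Real.sqrt (4 * Real.pi / β) * Real.exp (-(4 * Real.pi ^ 2 / β) * q ^ 2)

/-- The kernel `Φ_L(p,q) = e^{βp²} (1/L) Σ_{ξ ∈ ℤ/L} e^{-β(p-ξ/2)²} e^{2πiξq}`. -/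
noncomputable def PhiL (β L : ℝ) (p q : ℝ) : ℂ :=
  (Real.exp (β * p ^ 2) : ℝ) * (1 / (L : ℂ)) *
    ∑' j : ℤ, (Real.exp (-β * (p - (j : ℝ) / (2 * L)) ^ 2) : ℝ) *
      Complex.exp (2 * Real.pi * Complex.I * ((j : ℝ) / L) * q)

/-- The limiting kernel `Φ_∞(p,q) = e^{βp²} e^{4πipq} υ(q)`. -/
noncomputable def PhiInf (β : ℝ) (p q : ℝ) : ℂ :=
  (Real.exp (β * p ^ 2) : ℝ) * Complex.exp (4 * Real.pi * Complex.I * p * q) *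
    (upsilon β q : ℝ)


section Aux
open Real Complex Filter


lemma summable_gauss_nat {c : ℝ} (hc : 0 < c) (y : ℝ) {s : ℝ} (hs : 0 < s) :
    Summable fun n : ℕ => Real.exp (-(c * (y - n * s) ^ 2)) := by
  apply Summable.of_norm_bounded_eventually_nat (g := fun n => Real.exp (-(c * s ^ 2 / 4)) ^ n)
  · refine summable_geometric_of_lt_one (Real.exp_pos _).le (Real.exp_lt_one_iff.mpr ?_)
    have : 0 < c * s ^ 2 / 4 := by positivity
    linarith
  · filter_upwards [Filter.eventually_ge_atTop ⌈2 * |y| / s⌉₊] with n hn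
    have h1 : 2 * |y| / s ≤ n := le_trans (Nat.le_ceil _) (by exact_mod_cast hn)
    have h2 : 2 * |y| ≤ n * s := by
      rw [div_le_iff₀ hs] at h1; linarith
    have h3 : (n : ℝ) * s / 2 ≤ |y - n * s| := by
      rw [abs_sub_comm]
      calc (n:ℝ) * s / 2 ≤ n * s - |y| := by linarith [abs_nonneg y]
        _ ≤ n * s - y := by linarith [le_abs_self y]
        _ ≤ |n * s - y| := le_abs_self _
    have h4 : (n : ℝ) * (s ^ 2 / 4) ≤ (y - n * s) ^ 2 := by
      have h5 : ((n : ℝ) * s / 2) ^ 2 ≤ (y - n * s) ^ 2 := by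
        calc ((n : ℝ) * s / 2) ^ 2 ≤ |y - n*s| ^ 2 := by
              apply pow_le_pow_left₀ (by positivity) h3
          _ = (y - n*s)^2 := _root_.sq_abs _
      have h6 : (n:ℝ) * (s^2/4) ≤ ((n:ℝ) * s / 2)^2 := by
        have hn1 : (n:ℝ) ≤ (n:ℝ)^2 := by
          norm_cast; exact Nat.le_self_pow two_ne_zero n
        nlinarith [sq_nonneg s]
      linarith
    rw [Real.norm_eq_abs, abs_of_pos (Real.exp_pos _), ← Real.exp_nat_mul]
    apply Real.exp_le_exp.mpr
    have : (n:ℝ) * (c * s^2/4) = c * ((n:ℝ) * (s^2/4)) := by ring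
    rw [mul_neg, this]
    exact neg_le_neg (by nlinarith)

lemma summable_gauss_int {c : ℝ} (hc : 0 < c) (x : ℝ) {s : ℝ} (hs : 0 < s) :
    Summable fun n : ℤ => Real.exp (-(c * (x - n * s) ^ 2)) := by
  rw [summable_int_iff_summable_nat_and_neg]
  constructor
  · exact_mod_cast summable_gauss_nat hc x hs
  · have := summable_gauss_nat hc (-x) hs
    apply this.congr
    intro n
    push_cast
    ring_nf

lemma upsilon_nonneg (β q : ℝ) : 0 ≤ upsilon β q :=
  mul_nonneg (Real.sqrt_nonneg _) (Real.exp_pos _).le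

lemma poisson (β : ℝ) (hβ : 0 < β) (L : ℝ) (hL : 0 < L) (p q : ℝ) :
    PhiL β L p q = (Real.exp (β * p ^ 2) : ℝ) *
      ∑' n : ℤ, Complex.exp (4 * Real.pi * Complex.I * p * (q - n * L)) *
        (upsilon β (q - n * L) : ℝ) := by
  have hπ := Real.pi_pos
  set a : ℂ := ((β / (4 * Real.pi * L ^ 2) : ℝ) : ℂ) with ha_def
  have ha : 0 < a.re := by
    rw [ha_def, Complex.ofReal_re]; positivity
  set b : ℂ := (β * p + 2 * Real.pi * Complex.I * q) / (2 * Real.pi * L) with hb_def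
  -- step 1: rewrite each term of the PhiL sum
  have hterm : ∀ j : ℤ, ((Real.exp (-β * (p - (j : ℝ) / (2 * L)) ^ 2) : ℝ) : ℂ) *
      Complex.exp (2 * Real.pi * Complex.I * ((j : ℝ) / L) * q)
      = Complex.exp (-(β : ℂ) * p ^ 2) *
        Complex.exp (-Real.pi * a * (j : ℂ) ^ 2 + 2 * Real.pi * b * (j : ℂ)) := by
    intro j
    have hL' : (L : ℂ) ≠ 0 := Complex.ofReal_ne_zero.mpr hL.ne'
    have hπ' : ((Real.pi : ℝ) : ℂ) ≠ 0 := Complex.ofReal_ne_zero.mpr Real.pi_ne_zero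
    rw [Complex.ofReal_exp, ← Complex.exp_add, ← Complex.exp_add]
    congr 1
    rw [ha_def, hb_def]
    push_cast
    field_simp
    ring
  -- key identity for RHS terms
  have hL' : (L : ℂ) ≠ 0 := Complex.ofReal_ne_zero.mpr hL.ne'
  have hπ' : ((Real.pi : ℝ) : ℂ) ≠ 0 := Complex.ofReal_ne_zero.mpr Real.pi_ne_zero
  have hβ' : ((β : ℝ) : ℂ) ≠ 0 := Complex.ofReal_ne_zero.mpr hβ.ne'
  have key : ∀ n : ℤ, Complex.exp (-(Real.pi : ℂ) / a * ((n : ℂ) + Complex.I * b) ^ 2)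
      = Complex.exp ((β : ℂ) * p ^ 2) *
        (Complex.exp (4 * Real.pi * Complex.I * p * (q - n * L)) *
          ((Real.exp (-(4 * Real.pi ^ 2 / β) * (q - n * L) ^ 2) : ℝ) : ℂ)) := by
    intro n
    have hnb : (n : ℂ) + Complex.I * b
        = (((n : ℝ) - q / L : ℝ) : ℂ) + ((β * p / (2 * Real.pi * L) : ℝ) : ℂ) * Complex.I := by
      rw [hb_def]
      push_cast
      field_simp [hπ', hL']
      linear_combination (2 * (Real.pi:ℂ) * q) * Complex.I_sq
    have hsq : ∀ u v : ℝ, (((u:ℝ):ℂ) + ((v:ℝ):ℂ) * Complex.I) ^ 2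
        = ((u^2 - v^2 : ℝ) : ℂ) + ((2*u*v : ℝ) : ℂ) * Complex.I := by
      intro u v
      push_cast
      linear_combination ((v:ℝ):ℂ)^2 * Complex.I_sq
    have hw : -(Real.pi : ℂ) / a = ((-(4 * Real.pi ^ 2 * L ^ 2 / β) : ℝ) : ℂ) := by
      rw [ha_def]
      push_cast
      field_simp
    rw [hnb, hsq, Complex.ofReal_exp, ← Complex.exp_add, ← Complex.exp_add, hw]
    congr 1
    set u : ℝ := (n : ℝ) - q / L
    set v : ℝ := β * p / (2 * Real.pi * L)
    set w : ℝ := -(4 * Real.pi ^ 2 * L ^ 2 / β)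
    have lhs_eq : (w : ℂ) * ((u ^ 2 - v ^ 2 : ℝ) + ((2 * u * v : ℝ) : ℂ) * Complex.I)
        = ((w * (u ^ 2 - v ^ 2) : ℝ) : ℂ) + ((w * (2 * u * v) : ℝ) : ℂ) * Complex.I := by
      push_cast; ring
    have rhs_eq : ((β : ℂ)) * (p : ℂ) ^ 2 + (4 * (Real.pi : ℂ) * Complex.I * p * ((q : ℂ) - (n : ℂ) * L)
          + ((-(4 * Real.pi ^ 2 / β) * (q - n * L) ^ 2 : ℝ) : ℂ))
        = ((β * p ^ 2 + -(4 * Real.pi ^ 2 / β) * (q - n * L) ^ 2 : ℝ) : ℂ)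
          + ((4 * Real.pi * p * (q - n * L) : ℝ) : ℂ) * Complex.I := by
      push_cast; ring
    rw [lhs_eq, rhs_eq]
    have h1 : w * (u ^ 2 - v ^ 2) = β * p ^ 2 + -(4 * Real.pi ^ 2 / β) * (q - n * L) ^ 2 := by
      simp only [u, v, w]
      field_simp
      ring
    have h2 : w * (2 * u * v) = 4 * Real.pi * p * (q - n * L) := by
      simp only [u, v, w]
      field_simp
      ring
    rw [h1, h2]
  -- scalar facts
  have hs1pos : 0 < Real.sqrt (β / (4 * Real.pi * L ^ 2)) :=
    Real.sqrt_pos.mpr (by positivity)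
  have hs1ne : ((Real.sqrt (β / (4 * Real.pi * L ^ 2)) : ℝ) : ℂ) ≠ 0 :=
    Complex.ofReal_ne_zero.mpr hs1pos.ne'
  have ha2 : a ^ (1/2 : ℂ) = ((Real.sqrt (β / (4 * Real.pi * L ^ 2)) : ℝ) : ℂ) := by
    rw [ha_def, show (1/2 : ℂ) = ((1/2 : ℝ) : ℂ) by norm_num,
      ← Complex.ofReal_cpow (by positivity), ← Real.rpow_natCast]
    norm_num
    rw [Real.sqrt_eq_rpow]
  have hs2' : ((Real.sqrt (β / (4 * Real.pi * L ^ 2)) : ℝ) : ℂ)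
      * ((Real.sqrt (4 * Real.pi / β) : ℝ) : ℂ) * (L : ℂ) = 1 := by
    have hr : Real.sqrt (β / (4 * Real.pi * L ^ 2)) * Real.sqrt (4 * Real.pi / β) * L = 1 := by
      rw [← Real.sqrt_mul (by positivity)]
      have : β / (4 * Real.pi * L ^ 2) * (4 * Real.pi / β) = (1/L) ^ 2 := by
        field_simp
      rw [this, Real.sqrt_sq (by positivity)]
      field_simp
    exact_mod_cast congrArg (fun x : ℝ => (x : ℂ)) hr
  have hcancel : Complex.exp (-(β:ℂ) * p^2) * Complex.exp ((β:ℂ) * p^2) = 1 := by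
    rw [← Complex.exp_add]; simp
  -- assemble
  simp only [PhiL]
  rw [tsum_congr hterm, tsum_mul_left, Complex.tsum_exp_neg_quadratic ha b,
    tsum_congr key, tsum_mul_left, ha2]
  have hups : ∀ n : ℤ, Complex.exp (4 * Real.pi * Complex.I * p * ((q:ℂ) - (n:ℂ) * L)) *
      ((upsilon β (q - n * L) : ℝ) : ℂ)
      = ((Real.sqrt (4 * Real.pi / β) : ℝ) : ℂ) *
        (Complex.exp (4 * Real.pi * Complex.I * p * ((q:ℂ) - (n:ℂ) * L)) *
          ((Real.exp (-(4 * Real.pi ^ 2 / β) * (q - n * L) ^ 2) : ℝ) : ℂ)) := by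
    intro n
    rw [upsilon, Complex.ofReal_mul]
    ring
  rw [tsum_congr hups, tsum_mul_left]
  set S := ∑' n : ℤ, Complex.exp (4 * Real.pi * Complex.I * p * ((q:ℂ) - (n:ℂ) * L)) *
    ((Real.exp (-(4 * Real.pi ^ 2 / β) * (q - n * L) ^ 2) : ℝ) : ℂ)
  set E := ((Real.exp (β * p ^ 2) : ℝ) : ℂ)
  set s1 := ((Real.sqrt (β / (4 * Real.pi * L ^ 2)) : ℝ) : ℂ)
  set c1 := ((Real.sqrt (4 * Real.pi / β) : ℝ) : ℂ)
  calc E * (1 / (L:ℂ)) * (Complex.exp (-(β:ℂ) * p^2) * (1 / s1 *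
        (Complex.exp ((β:ℂ) * p^2) * S)))
      = (Complex.exp (-(β:ℂ) * p^2) * Complex.exp ((β:ℂ) * p^2)) * E *
          ((1 / (L:ℂ)) * (1 / s1)) * S := by ring
    _ = E * ((1 / (L:ℂ)) * (1 / s1)) * S := by rw [hcancel]; ring
    _ = E * (c1 * S) := by
        have hfin : (1 / (L:ℂ)) * (1 / s1) = c1 := by
          field_simp
          linear_combination (-2 : ℂ) * hs2' + hs2'
        rw [hfin]; ring


lemma norm_cexp_mul_I (x : ℝ) : ‖Complex.exp ((x : ℂ) * Complex.I)‖ = 1 := by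
  rw [Complex.norm_exp]
  simp

lemma norm_phase (β p x : ℝ) :
    ‖Complex.exp (4 * Real.pi * Complex.I * (p:ℂ) * (x:ℂ)) * ((upsilon β x : ℝ) : ℂ)‖
      = upsilon β x := by
  rw [norm_mul, show 4 * (Real.pi:ℂ) * Complex.I * (p:ℂ) * (x:ℂ)
      = ((4 * Real.pi * p * x : ℝ) : ℂ) * Complex.I by push_cast; ring,
    norm_cexp_mul_I, one_mul, Complex.norm_real, Real.norm_eq_abs,
    _root_.abs_of_nonneg (upsilon_nonneg β x)]

-- the key quadratic inequality
lemma quad_ineq {L q : ℝ} (hL : 1 ≤ L) (hq : |q| ≤ L / 2) {n : ℤ} (hn : n ≠ 0) :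
    (L - |q|) ^ 2 + ((n:ℝ) ^ 2 - 1) / 4 ≤ (q - n * L) ^ 2 := by
  have hA : (1:ℝ) ≤ |(n:ℝ)| := by
    rw [← Int.cast_abs]
    exact_mod_cast Int.one_le_abs hn
  have habs : |(n:ℝ)| * L - |q| ≤ |q - n * L| := by
    have h1 : |(n:ℝ) * L| - |q| ≤ |q - n * L| := by
      rw [abs_sub_comm]
      have := abs_sub_abs_le_abs_sub ((n:ℝ) * L) q
      linarith
    rw [abs_mul, abs_of_pos (by linarith : (0:ℝ) < L)] at h1
    exact h1
  have h0 : (0:ℝ) ≤ |(n:ℝ)| * L - |q| := by nlinarith [abs_nonneg q]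
  have hsq : (|(n:ℝ)| * L - |q|) ^ 2 ≤ (q - n * L) ^ 2 := by
    calc (|(n:ℝ)| * L - |q|) ^ 2 ≤ |q - n * L| ^ 2 :=
          pow_le_pow_left₀ h0 habs 2
      _ = (q - n * L) ^ 2 := sq_abs _
  have hn2 : ((n:ℝ)) ^ 2 = |(n:ℝ)| ^ 2 := (_root_.sq_abs _).symm
  set A := |(n:ℝ)| with hA_def
  have hq0 : (0:ℝ) ≤ |q| := abs_nonneg q
  have e0 : (A * L - |q|) ^ 2 - (L - |q|) ^ 2 = (A - 1) * L * ((A + 1) * L - 2 * |q|) := by ring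
  have e1 : (A - 1) * L * (A * L) ≤ (A - 1) * L * ((A + 1) * L - 2 * |q|) := by
    apply mul_le_mul_of_nonneg_left (by linarith) (by nlinarith)
  have hL2 : (1:ℝ) ≤ L ^ 2 := by nlinarith
  have hAA : (0:ℝ) ≤ (A - 1) * A := mul_nonneg (by linarith) (by linarith)
  have e2 : (A - 1) * A ≤ (A - 1) * L * (A * L) := by nlinarith [mul_nonneg hAA (by linarith : (0:ℝ) ≤ L ^ 2 - 1)]
  have e3 : (A ^ 2 - 1) / 4 ≤ (A - 1) * A := by nlinarith
  linarith

noncomputable def Sconst (β : ℝ) : ℝ := ∑' n : ℤ, Real.exp (-(Real.pi ^ 2 / β) * (n:ℝ) ^ 2)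

noncomputable def Kconst (β : ℝ) : ℝ :=
  Real.sqrt (4 * Real.pi / β) * Real.exp (Real.pi ^ 2 / β) * Sconst β

lemma Sconst_summable {β : ℝ} (hβ : 0 < β) :
    Summable fun n : ℤ => Real.exp (-(Real.pi ^ 2 / β) * (n:ℝ) ^ 2) := by
  have h := summable_gauss_int (c := Real.pi ^ 2 / β) (by positivity) 0 (s := 1) one_pos
  apply h.congr
  intro n
  congr 1
  ring

lemma Sconst_pos {β : ℝ} (hβ : 0 < β) : 0 < Sconst β := by
  have h := Sconst_summable hβ
  have h1 : (1:ℝ) = Real.exp (-(Real.pi ^ 2 / β) * ((0:ℤ):ℝ) ^ 2) := by simp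
  calc (0:ℝ) < 1 := one_pos
    _ ≤ Sconst β := by
        rw [h1]
        exact Summable.le_tsum h 0 (fun n _ => (Real.exp_pos _).le)

lemma Kconst_pos {β : ℝ} (hβ : 0 < β) : 0 < Kconst β := by
  have := Sconst_pos hβ
  have hπ := Real.pi_pos
  unfold Kconst
  positivity

lemma pointwise_bound (β : ℝ) (hβ : 0 < β) {L : ℝ} (hL : 1 ≤ L) (p : ℝ) {q : ℝ}
    (hq : |q| ≤ L / 2) :
    ‖PhiL β L p q - PhiInf β p q‖ ≤ Real.exp (β * p ^ 2) * Kconst β *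
      Real.exp (-(4 * Real.pi ^ 2 / β) * (L - |q|) ^ 2) := by
  have hπ := Real.pi_pos
  have hL0 : (0:ℝ) < L := lt_of_lt_of_le one_pos hL
  set c : ℝ := 4 * Real.pi ^ 2 / β with hc_def
  have hc : 0 < c := by positivity
  set f : ℤ → ℂ := fun n => Complex.exp (4 * Real.pi * Complex.I * (p:ℂ) * ((q:ℂ) - (n:ℂ) * (L:ℂ))) *
    ((upsilon β (q - n * L) : ℝ) : ℂ) with hf_def
  have hnorm : ∀ n : ℤ, ‖f n‖ = upsilon β (q - n * L) := by
    intro n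
    have : (4 * (Real.pi:ℂ) * Complex.I * (p:ℂ) * ((q:ℂ) - (n:ℂ) * (L:ℂ)))
        = 4 * Real.pi * Complex.I * ((p:ℝ):ℂ) * (((q - n * L : ℝ):ℝ):ℂ) := by push_cast; ring
    rw [hf_def]
    simp only [this]
    exact norm_phase β p (q - n * L)
  have hsum_ups : Summable fun n : ℤ => upsilon β (q - n * L) := by
    have h := (summable_gauss_int hc q hL0).mul_left (Real.sqrt (4 * Real.pi / β))
    apply h.congr
    intro n
    rw [upsilon]
    congr 1
    rw [hc_def]
    ring
  have hsf : Summable f := by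
    apply Summable.of_norm
    simp only [hnorm]
    exact hsum_ups
  have hPhiInf : PhiInf β p q = ((Real.exp (β * p ^ 2) : ℝ) : ℂ) * f 0 := by
    rw [PhiInf, hf_def]
    push_cast
    ring_nf
  have hsplit : PhiL β L p q - PhiInf β p q
      = ((Real.exp (β * p ^ 2) : ℝ) : ℂ) * ∑' n : ℤ, if n = 0 then 0 else f n := by
    rw [poisson β hβ L hL0 p q, hPhiInf, ← mul_sub]
    congr 1
    rw [show (∑' n : ℤ, Complex.exp (4 * Real.pi * Complex.I * p * (q - n * L)) *
        ((upsilon β (q - n * L) : ℝ) : ℂ)) = ∑' n, f n from tsum_congr (fun n => by rw [hf_def]),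
      Summable.tsum_eq_add_tsum_ite hsf 0]
    ring
  rw [hsplit, norm_mul, Complex.norm_real, Real.norm_eq_abs,
    _root_.abs_of_nonneg (Real.exp_pos _).le, mul_assoc]
  apply mul_le_mul_of_nonneg_left _ (Real.exp_pos _).le
  -- bound the tail sum
  set g : ℤ → ℝ := fun n => (Real.sqrt (4 * Real.pi / β) * Real.exp (Real.pi ^ 2 / β) *
    Real.exp (-c * (L - |q|) ^ 2)) * Real.exp (-(Real.pi ^ 2 / β) * (n:ℝ) ^ 2) with hg_def
  have hgsum : Summable g := (Sconst_summable hβ).mul_left _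
  have hle : ∀ n : ℤ, ‖if n = 0 then (0:ℂ) else f n‖ ≤ g n := by
    intro n
    by_cases hn : n = 0
    · subst hn
      rw [if_pos rfl, norm_zero]
      simp only [g]
      positivity
    · rw [if_neg hn, hnorm n]
      simp only [g]
      rw [upsilon]
      have hquad := quad_ineq hL hq hn
      have hkey : Real.exp (-(4 * Real.pi ^ 2 / β) * (q - n * L) ^ 2)
          ≤ Real.exp (Real.pi ^ 2 / β) * Real.exp (-c * (L - |q|) ^ 2) *
            Real.exp (-(Real.pi ^ 2 / β) * (n:ℝ) ^ 2) := by
        rw [← Real.exp_add, ← Real.exp_add]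
        apply Real.exp_le_exp.mpr
        rw [hc_def]
        have expand : Real.pi ^ 2 / β + -(4 * Real.pi ^ 2 / β) * (L - |q|) ^ 2 +
            -(Real.pi ^ 2 / β) * (n:ℝ) ^ 2
            = -(4 * Real.pi ^ 2 / β) * ((L - |q|) ^ 2 + ((n:ℝ) ^ 2 - 1) / 4) := by
          field_simp
          ring
        rw [expand]
        exact mul_le_mul_of_nonpos_left hquad (neg_nonpos.mpr (by positivity))
      calc Real.sqrt (4 * Real.pi / β) * Real.exp (-(4 * Real.pi ^ 2 / β) * (q - n * L) ^ 2)
          ≤ Real.sqrt (4 * Real.pi / β) * (Real.exp (Real.pi ^ 2 / β) *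
            Real.exp (-c * (L - |q|) ^ 2) * Real.exp (-(Real.pi ^ 2 / β) * (n:ℝ) ^ 2)) :=
            mul_le_mul_of_nonneg_left hkey (Real.sqrt_nonneg _)
        _ = Real.sqrt (4 * Real.pi / β) * Real.exp (Real.pi ^ 2 / β) *
            Real.exp (-c * (L - |q|) ^ 2) * Real.exp (-(Real.pi ^ 2 / β) * (n:ℝ) ^ 2) := by ring
  have hnorm_sum : Summable fun n : ℤ => ‖if n = 0 then (0:ℂ) else f n‖ :=
    Summable.of_nonneg_of_le (fun n => norm_nonneg _) hle hgsum
  calc ‖∑' n : ℤ, if n = 0 then (0:ℂ) else f n‖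
      ≤ ∑' n : ℤ, ‖if n = 0 then (0:ℂ) else f n‖ := norm_tsum_le_tsum_norm hnorm_sum
    _ ≤ ∑' n : ℤ, g n := Summable.tsum_le_tsum hle hnorm_sum hgsum
    _ = Kconst β * Real.exp (-c * (L - |q|) ^ 2) := by
        simp only [g]
        rw [tsum_mul_left, Kconst, Sconst]
        ring

lemma continuous_PhiL (β : ℝ) (hβ : 0 < β) {L : ℝ} (hL : 0 < L) (p : ℝ) :
    Continuous fun q : ℝ => PhiL β L p q := by
  simp only [PhiL]
  apply Continuous.mul continuous_const
  apply continuous_tsum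
    (u := fun j : ℤ => Real.exp (-β * (p - (j : ℝ) / (2 * L)) ^ 2))
  · intro j
    exact Continuous.mul continuous_const
      (Complex.continuous_exp.comp (continuous_const.mul Complex.continuous_ofReal))
  · have h := summable_gauss_int hβ p (s := 1 / (2 * L)) (by positivity)
    apply h.congr
    intro j
    congr 1
    push_cast
    ring
  · intro j q
    rw [norm_mul, show 2 * (Real.pi:ℂ) * Complex.I * (((j:ℝ):ℂ) / (L:ℂ)) * (q:ℂ)
        = ((2 * Real.pi * ((j:ℝ) / L) * q : ℝ):ℂ) * Complex.I by push_cast; ring,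
      norm_cexp_mul_I, mul_one, Complex.norm_real, Real.norm_eq_abs,
      _root_.abs_of_nonneg (Real.exp_pos _).le]

lemma continuous_PhiInf (β p : ℝ) : Continuous fun q : ℝ => PhiInf β p q := by
  simp only [PhiInf, upsilon]
  apply Continuous.mul
  · apply Continuous.mul continuous_const
    exact Complex.continuous_exp.comp (continuous_const.mul Complex.continuous_ofReal)
  · apply Complex.continuous_ofReal.comp
    apply Continuous.mul continuous_const
    exact Real.continuous_exp.comp (continuous_const.mul (continuous_pow 2))

lemma integral_exp_affine {k : ℝ} (hk : k ≠ 0) (m a b : ℝ) :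
    (∫ q in a..b, Real.exp (k * q + m)) = k⁻¹ * (Real.exp (k * b + m) - Real.exp (k * a + m)) := by
  rw [intervalIntegral.integral_comp_mul_add Real.exp hk m, integral_exp, smul_eq_mul]

theorem phiL_phiInf_L2_bound_aux (β : ℝ) (hβ : 0 < β) :
    ∃ C : ℝ, 0 < C ∧ ∀ L : ℝ, 1 ≤ L → ∀ p : ℝ,
      (∫ q in (-L / 2)..(L / 2), ‖PhiL β L p q - PhiInf β p q‖ ^ 2) ≤
        C * Real.exp (2 * β * p ^ 2) * upsilon β (L / 2) ^ 2 := by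
  have hπ := Real.pi_pos
  have hK := Kconst_pos hβ
  refine ⟨(Kconst β) ^ 2 * β ^ 2 / (16 * Real.pi ^ 3), by positivity, ?_⟩
  intro L hL p
  have hL0 : (0:ℝ) < L := lt_of_lt_of_le one_pos hL
  have hle2 : -L / 2 ≤ L / 2 := by linarith
  set c : ℝ := 4 * Real.pi ^ 2 / β with hc_def
  have hc : 0 < c := by positivity
  set B : ℝ := Real.exp (2 * β * p ^ 2) * (Kconst β) ^ 2 * Real.exp (-(c / 2) * L ^ 2) with hB_def
  have hB : 0 < B := by positivity
  set G : ℝ → ℝ := fun q => B * (Real.exp (-(2 * c) * (L / 2 - q)) +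
    Real.exp (-(2 * c) * (L / 2 + q))) with hG_def
  -- pointwise bound
  have hpt : ∀ q ∈ Set.Icc (-L / 2) (L / 2), ‖PhiL β L p q - PhiInf β p q‖ ^ 2 ≤ G q := by
    intro q hq
    have hq' : |q| ≤ L / 2 := by
      rw [abs_le]
      constructor
      · linarith [hq.1]
      · exact hq.2
    have h1 := pointwise_bound β hβ hL p hq'
    have h2 : ‖PhiL β L p q - PhiInf β p q‖ ^ 2 ≤
        (Real.exp (β * p ^ 2) * Kconst β * Real.exp (-(4 * Real.pi ^ 2 / β) * (L - |q|) ^ 2)) ^ 2 :=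
      pow_le_pow_left₀ (norm_nonneg _) h1 2
    have h3 : (Real.exp (β * p ^ 2) * Kconst β * Real.exp (-(4 * Real.pi ^ 2 / β) * (L - |q|) ^ 2)) ^ 2
        = Real.exp (2 * β * p ^ 2) * (Kconst β) ^ 2 * Real.exp (-(2 * c) * (L - |q|) ^ 2) := by
      rw [mul_pow, mul_pow, ← Real.exp_nat_mul, ← Real.exp_nat_mul, hc_def]
      norm_num
      ring_nf
    -- (L - |q|)^2 ≥ L^2/4 + (L/2 - |q|)
    have h4 : L ^ 2 / 4 + (L / 2 - |q|) ≤ (L - |q|) ^ 2 := by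
      have hd : 0 ≤ L / 2 - |q| := by linarith
      nlinarith [sq_nonneg (L / 2 - |q|), mul_nonneg (by linarith : (0:ℝ) ≤ L - 1) hd]
    have h5 : Real.exp (-(2 * c) * (L - |q|) ^ 2)
        ≤ Real.exp (-(c / 2) * L ^ 2) * Real.exp (-(2 * c) * (L / 2 - |q|)) := by
      rw [← Real.exp_add]
      apply Real.exp_le_exp.mpr
      nlinarith [h4, hc]
    have h6 : Real.exp (-(2 * c) * (L / 2 - |q|)) ≤
        Real.exp (-(2 * c) * (L / 2 - q)) + Real.exp (-(2 * c) * (L / 2 + q)) := by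
      rcases abs_cases q with ⟨h, _⟩ | ⟨h, _⟩
      · rw [h]
        exact le_add_of_nonneg_right (Real.exp_pos _).le
      · rw [h, show L / 2 - -q = L / 2 + q by ring]
        exact le_add_of_nonneg_left (Real.exp_pos _).le
    calc ‖PhiL β L p q - PhiInf β p q‖ ^ 2
        ≤ Real.exp (2 * β * p ^ 2) * (Kconst β) ^ 2 * Real.exp (-(2 * c) * (L - |q|) ^ 2) := by
          rw [← h3]; exact h2
      _ ≤ Real.exp (2 * β * p ^ 2) * (Kconst β) ^ 2 *
            (Real.exp (-(c / 2) * L ^ 2) * Real.exp (-(2 * c) * (L / 2 - |q|))) := by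
          apply mul_le_mul_of_nonneg_left h5 (by positivity)
      _ ≤ G q := by
          rw [hG_def, hB_def]
          have := mul_le_mul_of_nonneg_left h6
            (by positivity : (0:ℝ) ≤ Real.exp (2 * β * p ^ 2) * (Kconst β) ^ 2 * Real.exp (-(c / 2) * L ^ 2))
          calc Real.exp (2 * β * p ^ 2) * (Kconst β) ^ 2 *
                (Real.exp (-(c / 2) * L ^ 2) * Real.exp (-(2 * c) * (L / 2 - |q|)))
              = Real.exp (2 * β * p ^ 2) * (Kconst β) ^ 2 * Real.exp (-(c / 2) * L ^ 2) *
                Real.exp (-(2 * c) * (L / 2 - |q|)) := by ring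
            _ ≤ _ := this
  -- integrability
  have hcont : Continuous fun q => ‖PhiL β L p q - PhiInf β p q‖ ^ 2 :=
    (((continuous_PhiL β hβ hL0 p).sub (continuous_PhiInf β p)).norm).pow 2
  have hG_cont : Continuous G := by
    apply continuous_const.mul
    exact ((Real.continuous_exp.comp (continuous_const.mul (continuous_const.sub continuous_id))).add
      (Real.continuous_exp.comp (continuous_const.mul (continuous_const.add continuous_id))))
  have hint1 : IntervalIntegrable (fun q => ‖PhiL β L p q - PhiInf β p q‖ ^ 2) volume (-L/2) (L/2) :=
    hcont.intervalIntegrable _ _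
  have hint2 : IntervalIntegrable G volume (-L/2) (L/2) := hG_cont.intervalIntegrable _ _
  have hmono := intervalIntegral.integral_mono_on hle2 hint1 hint2 hpt
  -- compute the integral of G
  have hIG : (∫ q in (-L/2)..(L/2), G q) ≤ B / c := by
    have hc2 : (2 * c) ≠ 0 := by positivity
    have hc2' : (-(2 * c)) ≠ 0 := by simp; positivity
    have hrw1 : ∀ q : ℝ, Real.exp (-(2 * c) * (L / 2 - q)) = Real.exp ((2 * c) * q + (-(c * L))) := by
      intro q; congr 1; ring
    have hrw2 : ∀ q : ℝ, Real.exp (-(2 * c) * (L / 2 + q)) = Real.exp ((-(2 * c)) * q + (-(c * L))) := by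
      intro q; congr 1; ring
    have hi1 : IntervalIntegrable (fun q => Real.exp (-(2 * c) * (L / 2 - q))) volume (-L/2) (L/2) :=
      (Real.continuous_exp.comp (continuous_const.mul (continuous_const.sub continuous_id))).intervalIntegrable _ _
    have hi2 : IntervalIntegrable (fun q => Real.exp (-(2 * c) * (L / 2 + q))) volume (-L/2) (L/2) :=
      (Real.continuous_exp.comp (continuous_const.mul (continuous_const.add continuous_id))).intervalIntegrable _ _
    have e1 : (∫ q in (-L/2)..(L/2), Real.exp (-(2 * c) * (L / 2 - q)))
        = (2 * c)⁻¹ * (1 - Real.exp (-(2 * c) * L)) := by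
      simp_rw [hrw1]
      rw [integral_exp_affine hc2 (-(c * L)) (-L/2) (L/2)]
      have h1 : (2 * c) * (L / 2) + (-(c * L)) = 0 := by ring
      have h2 : (2 * c) * (-L / 2) + (-(c * L)) = -(2 * c) * L := by ring
      rw [h1, h2, Real.exp_zero]
    have e2 : (∫ q in (-L/2)..(L/2), Real.exp (-(2 * c) * (L / 2 + q)))
        = (2 * c)⁻¹ * (1 - Real.exp (-(2 * c) * L)) := by
      simp_rw [hrw2]
      rw [integral_exp_affine hc2' (-(c * L)) (-L/2) (L/2)]
      have h1 : (-(2 * c)) * (L / 2) + (-(c * L)) = -(2 * c) * L := by ring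
      have h2 : (-(2 * c)) * (-L / 2) + (-(c * L)) = 0 := by ring
      rw [h1, h2, Real.exp_zero]
      field_simp
      ring
    have eG : (∫ q in (-L/2)..(L/2), G q)
        = B * ((2 * c)⁻¹ * (1 - Real.exp (-(2 * c) * L)) + (2 * c)⁻¹ * (1 - Real.exp (-(2 * c) * L))) := by
      rw [hG_def]
      rw [intervalIntegral.integral_const_mul, intervalIntegral.integral_add hi1 hi2, e1, e2]
    rw [eG]
    have hbound : (2 * c)⁻¹ * (1 - Real.exp (-(2 * c) * L)) ≤ (2 * c)⁻¹ := by
      apply mul_le_of_le_one_right (by positivity)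
      have := Real.exp_pos (-(2 * c) * L)
      linarith
    calc B * ((2 * c)⁻¹ * (1 - Real.exp (-(2 * c) * L)) + (2 * c)⁻¹ * (1 - Real.exp (-(2 * c) * L)))
        ≤ B * ((2 * c)⁻¹ + (2 * c)⁻¹) := by
          apply mul_le_mul_of_nonneg_left (add_le_add hbound hbound) hB.le
      _ = B / c := by field_simp; ring
  calc (∫ q in (-L / 2)..(L / 2), ‖PhiL β L p q - PhiInf β p q‖ ^ 2)
      ≤ ∫ q in (-L/2)..(L/2), G q := hmono
    _ ≤ B / c := hIG
    _ ≤ (Kconst β) ^ 2 * β ^ 2 / (16 * Real.pi ^ 3) * Real.exp (2 * β * p ^ 2) *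
          upsilon β (L / 2) ^ 2 := by
        rw [hB_def, upsilon, hc_def]
        rw [mul_pow, Real.sq_sqrt (by positivity : (0:ℝ) ≤ 4 * Real.pi / β),
          ← Real.exp_nat_mul]
        rw [div_le_iff₀ (by positivity : (0:ℝ) < 4 * Real.pi ^ 2 / β)]
        have hexp_eq : ((2:ℕ):ℝ) * (-(4 * Real.pi ^ 2 / β) * (L / 2) ^ 2) = -(4 * Real.pi ^ 2 / β / 2) * L ^ 2 := by
          push_cast; ring
        rw [hexp_eq]
        apply le_of_eq
        field_simp
        ring


end Aux

/-- there is a constant `C > 0` depending only on `β` such that for every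
`L ≥ 1` and every `p ∈ ℝ`,
`∫_{-L/2}^{L/2} |Φ_L(p,q) − Φ_∞(p,q)|² dq ≤ C e^{2βp²} υ(L/2)²`. -/
theorem phiL_phiInf_L2_bound (β : ℝ) (hβ : 0 < β) :
    ∃ C : ℝ, 0 < C ∧ ∀ L : ℝ, 1 ≤ L → ∀ p : ℝ,
      (∫ q in (-L / 2)..(L / 2), ‖PhiL β L p q - PhiInf β p q‖ ^ 2) ≤
        C * Real.exp (2 * β * p ^ 2) * upsilon β (L / 2) ^ 2 := by
  exact phiL_phiInf_L2_bound_aux β hβ
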